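/- Let f : ℝⁿ → ℝ have L-Lipschitz gradient, achieve its minimum with crit f = Argmin f ≠ ∅, and satisfy ‖∇f(x)‖ ≥ ν·d(x, crit f) on the sublevel set Ω = {x : f(x) ≤ min f + ε} with ν < L. Then gradient descent with step size 1/L started in Ω satisfies f(x_{k+1}) − min f ≤ (1 − (ν/L)²)·(f(x_k) − min f) for all k ≥ 0. -/

import Mathlib

open scoped RealInnerProductSpace

/-- Descent lemma: for `f` with `L`-Lipschitz gradient,
`f y ≤ f x + ⟪∇f x, y - x⟫ + (L/2)‖y - x‖²`. -/
theorem descent_lemma' {E : Type*} [NormedAddCommGroup E] [InnerProductSpace ℝ E]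
    [CompleteSpace E]
    (f : E → ℝ) (f' : E → E) (hf : ∀ x, HasGradientAt f (f' x) x)
    (L : ℝ) (hL : 0 ≤ L)
    (hLip : ∀ x y, ‖f' x - f' y‖ ≤ L * ‖x - y‖) (x y : E) :
    f y ≤ f x + ⟪f' x, y - x⟫ + L / 2 * ‖y - x‖ ^ 2 := by
  have hcontf' : Continuous f' := by
    have : LipschitzWith (Real.toNNReal L) f' := by
      apply LipschitzWith.of_dist_le_mul
      intro a b
      simpa [dist_eq_norm, Real.coe_toNNReal L hL] using hLip a b
    exact this.continuous
  set c : ℝ → E := fun t => x + t • (y - x) with hc_def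
  have hc : ∀ t : ℝ, HasDerivAt c (y - x) t := by
    intro t
    have h := ((hasDerivAt_id t).smul_const (y - x)).const_add x
    rw [one_smul] at h
    exact h
  have hg : ∀ t : ℝ, HasDerivAt (fun t => f (c t)) ⟪f' (c t), y - x⟫ t := by
    intro t
    have := ((hf (c t)).hasFDerivAt).comp_hasDerivAt t (hc t)
    rw [InnerProductSpace.toDual_apply_apply] at this
    exact this
  have hcontg : Continuous fun t : ℝ => ⟪f' (c t), y - x⟫ := by
    apply Continuous.inner
    · exact hcontf'.comp (by continuity)
    · exact continuous_const
  have hint : f (c 1) - f (c 0) = ∫ t in (0:ℝ)..1, ⟪f' (c t), y - x⟫ := by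
    rw [intervalIntegral.integral_eq_sub_of_hasDerivAt (fun t _ => hg t)
      (hcontg.intervalIntegrable 0 1)]
  have hc0 : c 0 = x := by simp [hc_def]
  have hc1 : c 1 = y := by simp [hc_def]
  have hbound : ∀ t ∈ Set.Icc (0:ℝ) 1,
      ⟪f' (c t), y - x⟫ ≤ ⟪f' x, y - x⟫ + L * t * ‖y - x‖ ^ 2 := by
    intro t ht
    have h1 : ⟪f' (c t) - f' x, y - x⟫ ≤ ‖f' (c t) - f' x‖ * ‖y - x‖ :=
      real_inner_le_norm _ _
    have h2 : ‖f' (c t) - f' x‖ ≤ L * (t * ‖y - x‖) := by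
      have := hLip (c t) x
      have hct : ‖c t - x‖ = t * ‖y - x‖ := by
        simp [hc_def, norm_smul, abs_of_nonneg ht.1]
      rw [hct] at this
      exact this
    have h3 : ‖f' (c t) - f' x‖ * ‖y - x‖ ≤ L * (t * ‖y - x‖) * ‖y - x‖ :=
      mul_le_mul_of_nonneg_right h2 (norm_nonneg _)
    have h4 : ⟪f' (c t) - f' x, y - x⟫ = ⟪f' (c t), y - x⟫ - ⟪f' x, y - x⟫ := by
      rw [inner_sub_left]
    nlinarith [sq_nonneg ‖y - x‖]
  have hmono : (∫ t in (0:ℝ)..1, ⟪f' (c t), y - x⟫) ≤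
      ∫ t in (0:ℝ)..1, (⟪f' x, y - x⟫ + L * t * ‖y - x‖ ^ 2) := by
    apply intervalIntegral.integral_mono_on (by norm_num)
      (hcontg.intervalIntegrable 0 1)
    · exact (Continuous.intervalIntegrable (by continuity) 0 1)
    · exact hbound
  have hval : (∫ t in (0:ℝ)..1, (⟪f' x, y - x⟫ + L * t * ‖y - x‖ ^ 2)) =
      ⟪f' x, y - x⟫ + L / 2 * ‖y - x‖ ^ 2 := by
    rw [intervalIntegral.integral_add (intervalIntegrable_const)
      (Continuous.intervalIntegrable (by continuity) 0 1)]
    simp only [intervalIntegral.integral_const, smul_eq_mul]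
    have : (∫ t in (0:ℝ)..1, L * t * ‖y - x‖ ^ 2) =
        L * ‖y - x‖ ^ 2 * ∫ t in (0:ℝ)..1, t := by
      rw [← intervalIntegral.integral_const_mul]
      congr 1; ext t; ring
    rw [this, integral_id]
    ring
  have := hint
  rw [hc0, hc1] at this
  linarith [hmono.trans_eq hval, this]

/-- For `f` with `L`-Lipschitz gradient, `crit f = Argmin f ≠ ∅`, and the
residual error bound `‖∇f(x)‖ ≥ ν·d(x, crit f)` on `Ω = {x : f(x) ≤ min f + ε}` with
`ν < L`, gradient descent with step `1/L` started in `Ω` converges linearly: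
`f(x_{k+1}) − min f ≤ (1 − (ν/L)²)·(f(x_k) − min f)`. -/
theorem stmt9 {n : ℕ} (f : EuclideanSpace ℝ (Fin n) → ℝ)
    (f' : EuclideanSpace ℝ (Fin n) → EuclideanSpace ℝ (Fin n))
    (hf : ∀ x, HasGradientAt f (f' x) x)
    (L : ℝ) (hL : 0 < L)
    (hLip : ∀ x y, ‖f' x - f' y‖ ≤ L * ‖x - y‖)
    (m : ℝ) (hm : ∀ x, m ≤ f x) (hach : ∃ x, f x = m)
    (hcrit : {x | f' x = 0} = {x | ∀ y, f x ≤ f y})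
    (hne : {x | f' x = 0}.Nonempty)
    (ε : ℝ) (hε : 0 < ε)
    (ν : ℝ) (hν : 0 < ν) (hνL : ν < L)
    (hEB : ∀ x ∈ {x | f x ≤ m + ε},
      ν * Metric.infDist x {x | f' x = 0} ≤ ‖f' x‖)
    (x : ℕ → EuclideanSpace ℝ (Fin n))
    (hx0 : x 0 ∈ {x | f x ≤ m + ε})
    (hiter : ∀ k, x (k+1) = x k - (1/L) • f' (x k)) :
    ∀ k, f (x (k+1)) - m ≤ (1 - (ν/L)^2) * (f (x k) - m) := by
  set S := {x | f' x = 0} with hS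
  -- every critical point attains the minimum value m
  have hS_min : ∀ w ∈ S, f w = m := by
    intro w hw
    have hw' : ∀ y, f w ≤ f y := by
      have := hcrit ▸ hw
      exact this
    obtain ⟨z, hz⟩ := hach
    exact le_antisymm (hz ▸ hw' z) (hm w)
  -- quadratic upper bound via distance to critical set
  have hquad : ∀ z, f z - m ≤ L / 2 * (Metric.infDist z S) ^ 2 := by
    intro z
    have hfz : 0 ≤ f z - m := by linarith [hm z]
    set r := Real.sqrt (2 * (f z - m) / L) with hr
    have hr_nonneg : 0 ≤ 2 * (f z - m) / L := by positivity
    have hle : r ≤ Metric.infDist z S := by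
      by_contra hcon
      push_neg at hcon
      obtain ⟨w, hw, hdw⟩ := (Metric.infDist_lt_iff hne).mp hcon
      apply absurd hdw
      push_neg
      show r ≤ dist z w
      have hd := descent_lemma' f f' hf L hL.le hLip w z
      rw [hS_min w hw, hw, inner_zero_left] at hd
      -- f z ≤ m + L/2 * ‖z - w‖^2
      have hsq : 2 * (f z - m) / L ≤ ‖z - w‖ ^ 2 := by
        rw [div_le_iff₀ hL] at *
        nlinarith
      calc r ≤ Real.sqrt (‖z - w‖ ^ 2) := Real.sqrt_le_sqrt hsq
        _ = ‖z - w‖ := by rw [Real.sqrt_sq (norm_nonneg _)]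
        _ = dist z w := (dist_eq_norm z w).symm
      done
    have hsq : 2 * (f z - m) / L ≤ (Metric.infDist z S) ^ 2 := by
      calc 2 * (f z - m) / L = r ^ 2 := (Real.sq_sqrt hr_nonneg).symm
        _ ≤ (Metric.infDist z S) ^ 2 := by
            apply pow_le_pow_left₀ (Real.sqrt_nonneg _) hle
    rw [div_le_iff₀ hL] at hsq
    linarith
  -- one-step inequality
  have key : ∀ z, f z ≤ m + ε →
      f (z - (1/L) • f' z) - m ≤ (1 - (ν/L)^2) * (f z - m) := by
    intro z hz
    have hEBz := hEB z hz
    have hd2 : 2 * ν ^ 2 / L * (f z - m) ≤ ‖f' z‖ ^ 2 := by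
      have h1 : (ν * Metric.infDist z S) ^ 2 ≤ ‖f' z‖ ^ 2 :=
        pow_le_pow_left₀ (mul_nonneg hν.le Metric.infDist_nonneg) hEBz 2
      have h2 := hquad z
      have hfz : 0 ≤ f z - m := by linarith [hm z]
      have hdL : (f z - m) ≤ L / 2 * (Metric.infDist z S) ^ 2 := h2
      rw [div_mul_eq_mul_div, div_le_iff₀ hL]
      nlinarith [sq_nonneg ν, Metric.infDist_nonneg (x := z) (s := S)]
    have hdesc := descent_lemma' f f' hf L hL.le hLip z (z - (1/L) • f' z)
    have hy : z - (1/L) • f' z - z = -((1/L) • f' z) := by abel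
    rw [hy] at hdesc
    have hinner : ⟪f' z, -((1/L) • f' z)⟫ = -(1/L) * ‖f' z‖ ^ 2 := by
      rw [inner_neg_right, real_inner_smul_right, real_inner_self_eq_norm_sq]
      ring
    have hnorm : ‖-((1/L) • f' z)‖ ^ 2 = (1/L) ^ 2 * ‖f' z‖ ^ 2 := by
      rw [norm_neg, norm_smul]
      rw [mul_pow, Real.norm_eq_abs, sq_abs]
    rw [hinner, hnorm] at hdesc
    have hLne : L ≠ 0 := hL.ne'
    have : f (z - (1/L) • f' z) ≤ f z - 1/(2*L) * ‖f' z‖ ^ 2 := by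
      have : L / 2 * ((1/L) ^ 2 * ‖f' z‖ ^ 2) = 1/(2*L) * ‖f' z‖ ^ 2 := by
        field_simp
      rw [this] at hdesc
      have h' : -(1/L) * ‖f' z‖ ^ 2 + 1/(2*L) * ‖f' z‖ ^ 2 = -(1/(2*L)) * ‖f' z‖ ^ 2 := by
        field_simp; ring
      nlinarith [sq_nonneg ‖f' z‖]
    have hfz : 0 ≤ f z - m := by linarith [hm z]
    have h2L : 0 < 2 * L := by linarith
    have hfinal : 1/(2*L) * (2 * ν ^ 2 / L * (f z - m)) ≤ 1/(2*L) * ‖f' z‖ ^ 2 :=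
      mul_le_mul_of_nonneg_left hd2 (by positivity)
    have heq : 1/(2*L) * (2 * ν ^ 2 / L * (f z - m)) = (ν/L)^2 * (f z - m) := by
      field_simp
    rw [heq] at hfinal
    linarith
  -- iterates stay in the sublevel set
  have hfactor : 0 ≤ 1 - (ν/L)^2 ∧ (1 - (ν/L)^2) ≤ 1 := by
    constructor
    · have h1 : ν / L < 1 := (div_lt_one hL).mpr hνL
      have h0 : 0 < ν / L := by positivity
      nlinarith
    · have h0 : 0 < ν / L := by positivity
      nlinarith
  have hΩ : ∀ k, f (x k) ≤ m + ε := by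
    intro k
    induction k with
    | zero => exact hx0
    | succ k ih =>
      have := key (x k) ih
      rw [← hiter k] at this
      have hfz : 0 ≤ f (x k) - m := by linarith [hm (x k)]
      nlinarith [hfactor.1, hfactor.2]
  intro k
  rw [hiter k]
  exact key (x k) (hΩ k)
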